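/- Let Z = [[A,C],[D,E]] satisfy Z^T F Z = F with A invertible. Then Z = y_1 y_2 where y_1 = [[A,0],[D, J(A^T)^{-1}J]] and y_2 = [[Id, A^{-1}C],[0,Id]], and both y_1 and y_2 satisfy y_i^T F y_i = F. -/

import Mathlib

open Matrix

def Jmat (n : ℕ) : Matrix (Fin n) (Fin n) ℂ :=
  Matrix.of fun i j => if (i : ℕ) + (j : ℕ) + 1 = n then 1 else 0

def Fmat (n : ℕ) : Matrix (Fin n ⊕ Fin n) (Fin n ⊕ Fin n) ℂ :=
  Matrix.fromBlocks 0 (Jmat n) (-(Jmat n)) 0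

lemma Jmat_eq (n : ℕ) :
    Jmat n = Matrix.of fun i j : Fin n => if j = Fin.rev i then (1:ℂ) else 0 := by
  ext i j
  have hi := i.isLt; have hj := j.isLt
  simp only [Jmat, Matrix.of_apply, Fin.ext_iff, Fin.val_rev]
  congr 1
  simp only [eq_iff_iff]
  omega

lemma Jmat_mul_Jmat (n : ℕ) : Jmat n * Jmat n = 1 := by
  rw [Jmat_eq]
  ext i j
  rw [Matrix.mul_apply, Finset.sum_eq_single (Fin.rev i)]
  · simp [Matrix.one_apply, eq_comm]
  · intro b _ hb; simp [hb]
  · simp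

lemma Jmat_transpose (n : ℕ) : (Jmat n)ᵀ = Jmat n := by
  ext i j
  simp only [Matrix.transpose_apply, Jmat, Matrix.of_apply]
  congr 1
  simp only [eq_iff_iff]
  omega

theorem stmt9 (n : ℕ) (A C D E : Matrix (Fin n) (Fin n) ℂ)
    (hZ : (Matrix.fromBlocks A C D E)ᵀ * Fmat n * Matrix.fromBlocks A C D E = Fmat n)
    (hA : IsUnit A) :
    Matrix.fromBlocks A C D E
        = Matrix.fromBlocks A 0 D (Jmat n * (Aᵀ)⁻¹ * Jmat n)
            * Matrix.fromBlocks 1 (A⁻¹ * C) 0 1 ∧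
    (Matrix.fromBlocks A 0 D (Jmat n * (Aᵀ)⁻¹ * Jmat n))ᵀ * Fmat n
        * Matrix.fromBlocks A 0 D (Jmat n * (Aᵀ)⁻¹ * Jmat n) = Fmat n ∧
    (Matrix.fromBlocks 1 (A⁻¹ * C) 0 1)ᵀ * Fmat n
        * Matrix.fromBlocks 1 (A⁻¹ * C) 0 1 = Fmat n := by
  set J := Jmat n with hJdef
  have hJJ : J * J = 1 := Jmat_mul_Jmat n
  have hJT : Jᵀ = J := Jmat_transpose n
  have hJc : ∀ X : Matrix (Fin n) (Fin n) ℂ, J * (J * X) = X := by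
    intro X; rw [← mul_assoc, hJJ, one_mul]
  have hdet : IsUnit A.det := (Matrix.isUnit_iff_isUnit_det A).mp hA
  have hdetT : IsUnit Aᵀ.det := by rwa [Matrix.det_transpose]
  haveI := A.invertibleOfIsUnitDet hdet
  haveI := Aᵀ.invertibleOfIsUnitDet hdetT
  simp only [Fmat, fromBlocks_transpose, fromBlocks_multiply, Matrix.mul_zero, Matrix.zero_mul,
    Matrix.mul_neg, Matrix.neg_mul, add_zero, zero_add, Matrix.mul_one, Matrix.one_mul,
    fromBlocks_inj] at hZ
  obtain ⟨h11, h12, h21, h22⟩ := hZ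
  simp only [← hJdef] at h11 h12 h21 h22
  rw [neg_add_eq_sub, sub_eq_zero] at h11 h22
  rw [neg_add_eq_sub, sub_eq_iff_eq_add] at h12
  simp only [mul_assoc] at h11 h12 h22
  have f1X : ∀ X, Dᵀ * (J * (A * X)) = Aᵀ * (J * (D * X)) := by
    intro X
    have h := congrArg (fun Y => Y * X) h11
    simpa only [mul_assoc] using h.symm
  have key1X : ∀ X, (Aᵀ)⁻¹ * (Dᵀ * (J * X)) = J * (D * (A⁻¹ * X)) := by
    intro X
    have h := congrArg (fun Y => (Aᵀ)⁻¹ * Y) (f1X (A⁻¹ * X))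
    simp only [Matrix.mul_inv_cancel_left_of_invertible, Matrix.inv_mul_cancel_left_of_invertible]
      at h
    exact h
  have E_eq : E = J * ((Aᵀ)⁻¹ * J) + D * (A⁻¹ * C) := by
    have h := congrArg (fun X => J * ((Aᵀ)⁻¹ * X)) h12
    simp only [Matrix.inv_mul_cancel_left_of_invertible, hJc, mul_add, key1X] at h
    exact h
  have sym : Cᵀ * ((Aᵀ)⁻¹ * J) = J * (A⁻¹ * C) := by
    have h := h22
    rw [E_eq] at h
    simp only [transpose_add, transpose_mul, Matrix.transpose_nonsing_inv, transpose_transpose,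
      hJT, mul_add, add_mul, mul_assoc, hJc, key1X] at h
    exact add_right_cancel h
  refine ⟨?_, ?_, ?_⟩
  · simp only [fromBlocks_multiply, Matrix.mul_zero, Matrix.zero_mul, Matrix.mul_one,
      Matrix.one_mul, add_zero, zero_add, fromBlocks_inj]
    refine ⟨trivial, ?_, trivial, ?_⟩
    · rw [Matrix.mul_inv_cancel_left_of_invertible]
    · rw [E_eq, add_comm, mul_assoc]
  · simp only [Fmat, fromBlocks_transpose, fromBlocks_multiply, transpose_zero, transpose_one,
      Matrix.mul_zero, Matrix.zero_mul, Matrix.mul_neg, Matrix.neg_mul, add_zero, zero_add,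
      neg_zero, Matrix.mul_one, Matrix.one_mul, fromBlocks_inj, transpose_mul,
      Matrix.transpose_nonsing_inv, transpose_transpose, hJT, mul_assoc, hJc,
      Matrix.mul_inv_cancel_left_of_invertible, Matrix.inv_mul_cancel_left_of_invertible,
      Matrix.mul_inv_of_invertible, Matrix.inv_mul_of_invertible, ← hJdef]
    rw [h11]
    exact ⟨neg_add_cancel _, trivial, trivial, trivial⟩
  · simp only [Fmat, fromBlocks_transpose, fromBlocks_multiply, transpose_zero, transpose_one,
      Matrix.mul_zero, Matrix.zero_mul, Matrix.mul_neg, Matrix.neg_mul, add_zero, zero_add,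
      neg_zero, Matrix.mul_one, Matrix.one_mul, fromBlocks_inj, transpose_mul,
      Matrix.transpose_nonsing_inv, transpose_transpose, hJT, mul_assoc, hJc,
      Matrix.mul_inv_cancel_left_of_invertible, Matrix.inv_mul_cancel_left_of_invertible,
      Matrix.mul_inv_of_invertible, Matrix.inv_mul_of_invertible]
    rw [← hJdef, sym]
    exact ⟨trivial, trivial, trivial, neg_add_cancel _⟩
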